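/- There exist a hyperconvex diversity (X, δ) whose induced metric space (X, d) is a hyperconvex metric space, and a mapping T : X → X that is nonexpansive with respect to the induced metric d (indeed an isometry of (X,d)) but is not nonexpansive in the sense of diversities, i.e., there exists a finite set A ⊆ X with δ(T(A)) > δ(A). -/

import Mathlib

/-- A diversity on `X`: a real-valued function on finite subsets of `X` which is
nonnegative, vanishes exactly on sets of cardinality at most one, and satisfies the
triangle inequality `δ(A ∪ C) ≤ δ(A ∪ B) + δ(B ∪ C)` for nonempty `B`. -/
structure Diversity (X : Type*) [DecidableEq X] where
  delta : Finset X → ℝ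
  nonneg : ∀ A, 0 ≤ delta A
  eq_zero_iff : ∀ A, delta A = 0 ↔ A.card ≤ 1
  triangle : ∀ A B C : Finset X, B.Nonempty →
    delta (A ∪ C) ≤ delta (A ∪ B) + delta (B ∪ C)

namespace Diversity

variable {X : Type*} [DecidableEq X]

/-- A diversity is hyperconvex if for every `r : ⟨X⟩ → ℝ` with `r ∅ = 0` such that
`δ(⋃_{A ∈ 𝒜} A) ≤ ∑_{A ∈ 𝒜} r A` for every finite collection `𝒜` of finite subsets
of `X`, there is `z ∈ X` with `δ({z} ∪ Y) ≤ r Y` for all finite `Y ⊆ X`. -/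
def Hyperconvex (D : Diversity X) : Prop :=
  ∀ r : Finset X → ℝ, r ∅ = 0 →
    (∀ 𝒜 : Finset (Finset X), D.delta (𝒜.sup id) ≤ ∑ A ∈ 𝒜, r A) →
    ∃ z : X, ∀ Y : Finset X, D.delta (insert z Y) ≤ r Y

/-- A diversity is bounded if its values are uniformly bounded above. -/
def Bounded (D : Diversity X) : Prop :=
  ∃ M : ℝ, 0 ≤ M ∧ ∀ A : Finset X, D.delta A ≤ M

end Diversity

namespace Diversity

variable {X : Type*} [DecidableEq X]

/-- The closed ball of center `x` and radius `r` of the metric space induced by a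
diversity (`d(x, y) = δ {x, y}`). -/
def ball (D : Diversity X) (x : X) (r : ℝ) : Set X :=
  {y : X | D.delta {x, y} ≤ r}

/-- Hyperconvexity of the metric space induced by a diversity: every family of closed
balls whose radii are nonnegative and satisfy `d(x_α, x_β) ≤ r_α + r_β` has nonempty
intersection. -/
def InducedHyperconvex (D : Diversity X) : Prop :=
  ∀ s : Set (X × ℝ), (∀ p ∈ s, 0 ≤ p.2) →
    (∀ p ∈ s, ∀ q ∈ s, D.delta {p.1, q.1} ≤ p.2 + q.2) →
    (⋂ p ∈ s, D.ball p.1 p.2).Nonempty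

end Diversity


open Finset


/-- A point of the "star": the union of the two coordinate axes in the plane,
an `ℝ`-tree for the `ℓ1` metric. -/
abbrev SP : Type := {p : ℝ × ℝ // p.1 = 0 ∨ p.2 = 0}

noncomputable instance : DecidableEq SP := Classical.decEq _

namespace SP

/-- `ℓ1` distance. -/
noncomputable def dd (p q : SP) : ℝ := |p.1.1 - q.1.1| + |p.1.2 - q.1.2|

lemma dd_nonneg (p q : SP) : 0 ≤ dd p q := add_nonneg (abs_nonneg _) (abs_nonneg _)

lemma dd_self (p : SP) : dd p p = 0 := by simp [dd]

lemma dd_comm (p q : SP) : dd p q = dd q p := by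
  simp [dd, abs_sub_comm]

lemma dd_triangle (p b q : SP) : dd p q ≤ dd p b + dd b q := by
  have h1 := abs_sub_le p.1.1 b.1.1 q.1.1
  have h2 := abs_sub_le p.1.2 b.1.2 q.1.2
  simp only [dd]; linarith

lemma dd_pos {p q : SP} (h : p ≠ q) : 0 < dd p q := by
  rcases lt_or_eq_of_le (dd_nonneg p q) with h' | h'
  · exact h'
  · exfalso; apply h
    rw [dd] at h'
    have e1 : |p.1.1 - q.1.1| = 0 := by
      nlinarith [abs_nonneg (p.1.1 - q.1.1), abs_nonneg (p.1.2 - q.1.2)]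
    have e2 : |p.1.2 - q.1.2| = 0 := by
      nlinarith [abs_nonneg (p.1.1 - q.1.1), abs_nonneg (p.1.2 - q.1.2)]
    rw [abs_eq_zero, sub_eq_zero] at e1 e2
    exact Subtype.ext (Prod.ext e1 e2)

noncomputable def Mx (A : Finset SP) : ℝ := if h : A.Nonempty then A.sup' h (fun p => p.1.1) else 0
noncomputable def mx (A : Finset SP) : ℝ := if h : A.Nonempty then A.inf' h (fun p => p.1.1) else 0
noncomputable def My (A : Finset SP) : ℝ := if h : A.Nonempty then A.sup' h (fun p => p.1.2) else 0
noncomputable def my (A : Finset SP) : ℝ := if h : A.Nonempty then A.inf' h (fun p => p.1.2) else 0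

/-- The "Steiner" (total-tree-length) diversity value on the star:
sum of the coordinate widths. -/
noncomputable def sst (A : Finset SP) : ℝ := (Mx A - mx A) + (My A - my A)

/-- The diameter diversity value. -/
noncomputable def sdm (A : Finset SP) : ℝ :=
  if h : A.Nonempty then A.sup' h (fun p => A.sup' h (fun q => dd p q)) else 0

variable {A : Finset SP}

lemma le_Mx {p : SP} (hp : p ∈ A) : p.1.1 ≤ Mx A := by
  rw [Mx, dif_pos ⟨p, hp⟩]; exact Finset.le_sup' (fun p : SP => p.1.1) hp
lemma mx_le {p : SP} (hp : p ∈ A) : mx A ≤ p.1.1 := by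
  rw [mx, dif_pos ⟨p, hp⟩]; exact Finset.inf'_le (fun p : SP => p.1.1) hp
lemma le_My {p : SP} (hp : p ∈ A) : p.1.2 ≤ My A := by
  rw [My, dif_pos ⟨p, hp⟩]; exact Finset.le_sup' (fun p : SP => p.1.2) hp
lemma my_le {p : SP} (hp : p ∈ A) : my A ≤ p.1.2 := by
  rw [my, dif_pos ⟨p, hp⟩]; exact Finset.inf'_le (fun p : SP => p.1.2) hp

lemma exists_Mx (h : A.Nonempty) : ∃ p ∈ A, Mx A = p.1.1 := by
  rw [Mx, dif_pos h]; exact Finset.exists_mem_eq_sup' h _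
lemma exists_mx (h : A.Nonempty) : ∃ p ∈ A, mx A = p.1.1 := by
  rw [mx, dif_pos h]; exact Finset.exists_mem_eq_inf' h _
lemma exists_My (h : A.Nonempty) : ∃ p ∈ A, My A = p.1.2 := by
  rw [My, dif_pos h]; exact Finset.exists_mem_eq_sup' h _
lemma exists_my (h : A.Nonempty) : ∃ p ∈ A, my A = p.1.2 := by
  rw [my, dif_pos h]; exact Finset.exists_mem_eq_inf' h _

lemma Mx_le_iff (h : A.Nonempty) {m : ℝ} : Mx A ≤ m ↔ ∀ p ∈ A, p.1.1 ≤ m := by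
  rw [Mx, dif_pos h]; exact Finset.sup'_le_iff h _
lemma le_mx_iff (h : A.Nonempty) {m : ℝ} : m ≤ mx A ↔ ∀ p ∈ A, m ≤ p.1.1 := by
  rw [mx, dif_pos h]; exact Finset.le_inf'_iff h _
lemma My_le_iff (h : A.Nonempty) {m : ℝ} : My A ≤ m ↔ ∀ p ∈ A, p.1.2 ≤ m := by
  rw [My, dif_pos h]; exact Finset.sup'_le_iff h _
lemma le_my_iff (h : A.Nonempty) {m : ℝ} : m ≤ my A ↔ ∀ p ∈ A, m ≤ p.1.2 := by
  rw [my, dif_pos h]; exact Finset.le_inf'_iff h _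

lemma mx_le_Mx (h : A.Nonempty) : mx A ≤ Mx A := by
  obtain ⟨p, hp⟩ := h; exact le_trans (mx_le hp) (le_Mx hp)
lemma my_le_My (h : A.Nonempty) : my A ≤ My A := by
  obtain ⟨p, hp⟩ := h; exact le_trans (my_le hp) (le_My hp)

lemma sst_nonneg (A : Finset SP) : 0 ≤ sst A := by
  rcases A.eq_empty_or_nonempty with rfl | h
  · simp [sst, Mx, mx, My, my]
  · have := mx_le_Mx h; have := my_le_My h; unfold sst; linarith

lemma sst_empty : sst (∅ : Finset SP) = 0 := by simp [sst, Mx, mx, My, my]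

lemma sst_singleton (p : SP) : sst {p} = 0 := by
  simp [sst, Mx, mx, My, my]

lemma dd_le_sst {p q : SP} (hp : p ∈ A) (hq : q ∈ A) : dd p q ≤ sst A := by
  have h1 := le_Mx hp; have h2 := mx_le hq; have h3 := le_Mx hq; have h4 := mx_le hp
  have h5 := le_My hp; have h6 := my_le hq; have h7 := le_My hq; have h8 := my_le hp
  have a1 : |p.1.1 - q.1.1| ≤ Mx A - mx A := abs_sub_le_iff.mpr ⟨by linarith, by linarith⟩
  have a2 : |p.1.2 - q.1.2| ≤ My A - my A := abs_sub_le_iff.mpr ⟨by linarith, by linarith⟩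
  unfold dd sst; linarith

end SP
namespace SP
variable {A B C : Finset SP}

lemma dd_le_sdm {p q : SP} (hp : p ∈ A) (hq : q ∈ A) : dd p q ≤ sdm A := by
  have h : A.Nonempty := ⟨p, hp⟩
  rw [sdm, dif_pos h]
  exact le_trans (Finset.le_sup' (fun q => dd p q) hq)
    (Finset.le_sup' (f := fun x => A.sup' h (fun q => dd x q)) hp)

lemma sdm_le_iff (h : A.Nonempty) {m : ℝ} :
    sdm A ≤ m ↔ ∀ p ∈ A, ∀ q ∈ A, dd p q ≤ m := by
  rw [sdm, dif_pos h, Finset.sup'_le_iff]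
  exact forall₂_congr fun p _ => Finset.sup'_le_iff h _

lemma exists_sdm (h : A.Nonempty) : ∃ p ∈ A, ∃ q ∈ A, sdm A = dd p q := by
  rw [sdm, dif_pos h]
  obtain ⟨p, hp, hp'⟩ := Finset.exists_mem_eq_sup' h (fun p => A.sup' h (fun q => dd p q))
  obtain ⟨q, hq, hq'⟩ := Finset.exists_mem_eq_sup' h (fun q => dd p q)
  exact ⟨p, hp, q, hq, by rw [hp', hq']⟩

lemma sdm_nonneg (A : Finset SP) : 0 ≤ sdm A := by
  rcases A.eq_empty_or_nonempty with rfl | h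
  · simp [sdm]
  · obtain ⟨p, hp⟩ := h; exact le_trans (dd_nonneg p p) (dd_le_sdm hp hp)

lemma sdm_empty : sdm (∅ : Finset SP) = 0 := by simp [sdm]

lemma sdm_singleton (p : SP) : sdm {p} = 0 := by simp [sdm, dd_self]

lemma sdm_pair (p q : SP) : sdm {p, q} = dd p q := by
  apply le_antisymm
  · rw [sdm_le_iff ⟨p, by simp⟩]
    intro a ha b hb
    simp only [Finset.mem_insert, Finset.mem_singleton] at ha hb
    rcases ha with rfl | rfl <;> rcases hb with rfl | rfl <;>
      simp [dd_self, dd_comm, dd_nonneg, le_refl]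
  · exact dd_le_sdm (by simp) (by simp)

lemma sst_pair (p q : SP) : sst {p, q} = dd p q := by
  have h1 : Mx {p, q} = max p.1.1 q.1.1 := by
    rw [Mx, dif_pos ⟨p, by simp⟩]
    simp [Finset.sup'_insert]
  have h2 : mx {p, q} = min p.1.1 q.1.1 := by
    rw [mx, dif_pos ⟨p, by simp⟩]
    simp [Finset.inf'_insert]
  have h3 : My {p, q} = max p.1.2 q.1.2 := by
    rw [My, dif_pos ⟨p, by simp⟩]
    simp [Finset.sup'_insert]
  have h4 : my {p, q} = min p.1.2 q.1.2 := by
    rw [my, dif_pos ⟨p, by simp⟩]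
    simp [Finset.inf'_insert]
  rw [sst, h1, h2, h3, h4, dd]
  rw [max_comm p.1.1 q.1.1, min_comm p.1.1 q.1.1, max_sub_min_eq_abs,
    max_comm p.1.2 q.1.2, min_comm p.1.2 q.1.2, max_sub_min_eq_abs]

/-- Generic width triangle inequality over a union with common point. -/
lemma width_triangle (f : SP → ℝ) (hB : B.Nonempty) (hAC : (A ∪ C).Nonempty) :
    (A ∪ C).sup' hAC f - (A ∪ C).inf' hAC f ≤
      ((A ∪ B).sup' (by
        obtain ⟨b, hb⟩ := hB; exact ⟨b, Finset.mem_union_right _ hb⟩) f -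
       (A ∪ B).inf' (by
        obtain ⟨b, hb⟩ := hB; exact ⟨b, Finset.mem_union_right _ hb⟩) f) +
      ((B ∪ C).sup' (by
        obtain ⟨b, hb⟩ := hB; exact ⟨b, Finset.mem_union_left _ hb⟩) f -
       (B ∪ C).inf' (by
        obtain ⟨b, hb⟩ := hB; exact ⟨b, Finset.mem_union_left _ hb⟩) f) := by
  obtain ⟨b, hb⟩ := hB
  have hAB : (A ∪ B).Nonempty := ⟨b, Finset.mem_union_right _ hb⟩
  have hBC : (B ∪ C).Nonempty := ⟨b, Finset.mem_union_left _ hb⟩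
  obtain ⟨p, hp, hpe⟩ := Finset.exists_mem_eq_sup' hAC f
  obtain ⟨q, hq, hqe⟩ := Finset.exists_mem_eq_inf' hAC f
  have hbAB : b ∈ A ∪ B := Finset.mem_union_right _ hb
  have hbBC : b ∈ B ∪ C := Finset.mem_union_left _ hb
  have wAB : (A ∪ B).inf' hAB f ≤ (A ∪ B).sup' hAB f :=
    le_trans (Finset.inf'_le f hbAB) (Finset.le_sup' f hbAB)
  have wBC : (B ∪ C).inf' hBC f ≤ (B ∪ C).sup' hBC f :=
    le_trans (Finset.inf'_le f hbBC) (Finset.le_sup' f hbBC)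
  rw [hpe, hqe]
  rcases Finset.mem_union.mp hp with hpA | hpC <;> rcases Finset.mem_union.mp hq with hqA | hqC
  · have h1 : f p ≤ (A ∪ B).sup' hAB f := Finset.le_sup' f (Finset.mem_union_left _ hpA)
    have h2 : (A ∪ B).inf' hAB f ≤ f q := Finset.inf'_le f (Finset.mem_union_left _ hqA)
    linarith
  · have h1 : f p ≤ (A ∪ B).sup' hAB f := Finset.le_sup' f (Finset.mem_union_left _ hpA)
    have h2 : (A ∪ B).inf' hAB f ≤ f b := Finset.inf'_le f hbAB
    have h3 : f b ≤ (B ∪ C).sup' hBC f := Finset.le_sup' f hbBC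
    have h4 : (B ∪ C).inf' hBC f ≤ f q := Finset.inf'_le f (Finset.mem_union_right _ hqC)
    linarith
  · have h1 : f p ≤ (B ∪ C).sup' hBC f := Finset.le_sup' f (Finset.mem_union_right _ hpC)
    have h2 : (B ∪ C).inf' hBC f ≤ f b := Finset.inf'_le f hbBC
    have h3 : f b ≤ (A ∪ B).sup' hAB f := Finset.le_sup' f hbAB
    have h4 : (A ∪ B).inf' hAB f ≤ f q := Finset.inf'_le f (Finset.mem_union_left _ hqA)
    linarith
  · have h1 : f p ≤ (B ∪ C).sup' hBC f := Finset.le_sup' f (Finset.mem_union_right _ hpC)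
    have h2 : (B ∪ C).inf' hBC f ≤ f q := Finset.inf'_le f (Finset.mem_union_right _ hqC)
    linarith

lemma sst_triangle (hB : B.Nonempty) : sst (A ∪ C) ≤ sst (A ∪ B) + sst (B ∪ C) := by
  obtain ⟨b, hb⟩ := hB
  have hAB : (A ∪ B).Nonempty := ⟨b, Finset.mem_union_right _ hb⟩
  have hBC : (B ∪ C).Nonempty := ⟨b, Finset.mem_union_left _ hb⟩
  rcases (A ∪ C).eq_empty_or_nonempty with he | hAC
  · rw [he, sst_empty]
    exact add_nonneg (sst_nonneg _) (sst_nonneg _)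
  · have t1 := width_triangle (fun p : SP => p.1.1) ⟨b, hb⟩ hAC
    have t2 := width_triangle (fun p : SP => p.1.2) ⟨b, hb⟩ hAC
    simp only [sst, Mx, mx, My, my, dif_pos hAC, dif_pos hAB, dif_pos hBC]
    linarith

lemma sdm_triangle (hB : B.Nonempty) : sdm (A ∪ C) ≤ sdm (A ∪ B) + sdm (B ∪ C) := by
  obtain ⟨b, hb⟩ := hB
  have hbAB : b ∈ A ∪ B := Finset.mem_union_right _ hb
  have hbBC : b ∈ B ∪ C := Finset.mem_union_left _ hb
  rcases (A ∪ C).eq_empty_or_nonempty with he | hAC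
  · rw [he, sdm_empty]
    exact add_nonneg (sdm_nonneg _) (sdm_nonneg _)
  · obtain ⟨p, hp, q, hq, he⟩ := exists_sdm hAC
    rw [he]
    have key : ∀ x : SP, x ∈ A ∪ C → ∀ y : SP, y ∈ A ∪ C →
        dd x y ≤ sdm (A ∪ B) + sdm (B ∪ C) := by
      intro x hx y hy
      have tri := dd_triangle x b y
      rcases Finset.mem_union.mp hx with hxA | hxC <;>
        rcases Finset.mem_union.mp hy with hyA | hyC
      · exact le_trans (dd_le_sdm (Finset.mem_union_left _ hxA) (Finset.mem_union_left _ hyA))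
          (le_add_of_nonneg_right (sdm_nonneg _))
      · have h1 : dd x b ≤ sdm (A ∪ B) := dd_le_sdm (Finset.mem_union_left _ hxA) hbAB
        have h2 : dd b y ≤ sdm (B ∪ C) := dd_le_sdm hbBC (Finset.mem_union_right _ hyC)
        linarith
      · have h1 : dd x b ≤ sdm (B ∪ C) := dd_le_sdm (Finset.mem_union_right _ hxC) hbBC
        have h2 : dd b y ≤ sdm (A ∪ B) := dd_le_sdm hbAB (Finset.mem_union_left _ hyA)
        linarith
      · exact le_trans (dd_le_sdm (Finset.mem_union_right _ hxC) (Finset.mem_union_right _ hyC))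
          (le_add_of_nonneg_left (sdm_nonneg _))
    exact key p hp q hq

lemma sst_eq_zero_iff : sst A = 0 ↔ A.card ≤ 1 := by
  constructor
  · intro h
    by_contra hc
    push_neg at hc
    obtain ⟨p, hp, q, hq, hpq⟩ := Finset.one_lt_card.mp hc
    have := dd_le_sst hp hq
    have := dd_pos hpq
    linarith
  · intro h
    interval_cases hc : A.card
    · rw [Finset.card_eq_zero.mp hc]; exact sst_empty
    · obtain ⟨p, hp⟩ := Finset.card_eq_one.mp hc; rw [hp]; exact sst_singleton p

lemma sdm_eq_zero_iff : sdm A = 0 ↔ A.card ≤ 1 := by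
  constructor
  · intro h
    by_contra hc
    push_neg at hc
    obtain ⟨p, hp, q, hq, hpq⟩ := Finset.one_lt_card.mp hc
    have := dd_le_sdm hp hq
    have := dd_pos hpq
    linarith
  · intro h
    interval_cases hc : A.card
    · rw [Finset.card_eq_zero.mp hc]; exact sdm_empty
    · obtain ⟨p, hp⟩ := Finset.card_eq_one.mp hc; rw [hp]; exact sdm_singleton p

end SP

section StarHelly

/-- Core case of the star Helly lemma: some constraint set has empty `J`-part. -/
lemma starHellyCore {ι : Type*} (a b c e : ι → ℝ)
    (H2 : ∀ i, a i ≤ b i → c i ≤ e i → a i ≤ 0 ∧ 0 ≤ b i ∧ c i ≤ 0 ∧ 0 ≤ e i)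
    (H3 : ∀ i j, (max (a i) (a j) ≤ min (b i) (b j)) ∨ (max (c i) (c j) ≤ min (e i) (e j)))
    (i₀ : ι) (h₀J : e i₀ < c i₀) :
    ∃ u : ℝ, ∀ i, a i ≤ u ∧ u ≤ b i := by
  have base : ∀ i, a i ≤ b i ∧ a i ≤ b i₀ ∧ a i₀ ≤ b i := by
    intro i
    rcases H3 i i₀ with h | h
    · refine ⟨le_trans (le_max_left _ _) (le_trans h (min_le_left _ _)), ?_, ?_⟩
      · exact le_trans (le_max_left _ _) (le_trans h (min_le_right _ _))
      · exact le_trans (le_max_right _ _) (le_trans h (min_le_left _ _))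
    · exfalso
      have := le_trans (le_max_right _ _) (le_trans h (min_le_right _ _))
      linarith
  have pair : ∀ i j, a i ≤ b j := by
    intro i j
    rcases H3 i j with h | h
    · exact le_trans (le_max_left _ _) (le_trans h (min_le_right _ _))
    · have hci : c i ≤ e i := le_trans (le_max_left _ _) (le_trans h (min_le_left _ _))
      have hcj : c j ≤ e j := le_trans (le_max_right _ _) (le_trans h (min_le_right _ _))
      have hi := H2 i (base i).1 hci
      have hj := H2 j (base j).1 hcj
      linarith [hi.1, hj.2.1]
  haveI : Nonempty ι := ⟨i₀⟩
  set S : Set ℝ := Set.range (fun i => max (a i) (a i₀)) with hS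
  have hSne : S.Nonempty := ⟨max (a i₀) (a i₀), ⟨i₀, rfl⟩⟩
  have hSbdd : BddAbove S := by
    refine ⟨b i₀, ?_⟩
    rintro x ⟨i, rfl⟩
    exact max_le (pair i i₀) (base i₀).1
  refine ⟨sSup S, fun i => ⟨?_, ?_⟩⟩
  · exact le_trans (le_max_left _ _) (le_csSup hSbdd ⟨i, rfl⟩)
  · apply csSup_le hSne
    rintro x ⟨j, rfl⟩
    exact max_le (pair j i) (base i).2.2

/-- Helly-type lemma for "star-convex" constraint sets on the union of the two axes:
each constraint set is an interval `[a i, b i]` on the `x`-axis together with an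
interval `[c i, e i]` on the `y`-axis; if the sets are consistent, nonempty, and
pairwise intersecting, they have a common point. -/
lemma starHelly {ι : Type*} (a b c e : ι → ℝ)
    (H1 : ∀ i, a i ≤ b i ∨ c i ≤ e i)
    (H2 : ∀ i, a i ≤ b i → c i ≤ e i → a i ≤ 0 ∧ 0 ≤ b i ∧ c i ≤ 0 ∧ 0 ≤ e i)
    (H3 : ∀ i j, (max (a i) (a j) ≤ min (b i) (b j)) ∨ (max (c i) (c j) ≤ min (e i) (e j))) :
    ∃ u v : ℝ, (u = 0 ∨ v = 0) ∧
      ∀ i, (v = 0 ∧ a i ≤ u ∧ u ≤ b i) ∨ (u = 0 ∧ c i ≤ v ∧ v ≤ e i) := by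
  by_cases hJ : ∀ i, c i ≤ e i
  · by_cases hI : ∀ i, a i ≤ b i
    · -- all sets contain the centre
      refine ⟨0, 0, Or.inl rfl, fun i => Or.inl ⟨rfl, ?_, ?_⟩⟩
      · exact (H2 i (hI i) (hJ i)).1
      · exact (H2 i (hI i) (hJ i)).2.1
    · push_neg at hI
      obtain ⟨i₀, h₀⟩ := hI
      obtain ⟨v, hv⟩ := starHellyCore c e a b
        (fun i hce hab => by have := H2 i hab hce; tauto)
        (fun i j => (H3 i j).symm) i₀ h₀
      exact ⟨0, v, Or.inl rfl, fun i => Or.inr ⟨rfl, (hv i).1, (hv i).2⟩⟩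
  · push_neg at hJ
    obtain ⟨i₀, h₀⟩ := hJ
    obtain ⟨u, hu⟩ := starHellyCore a b c e H2 H3 i₀ h₀
    exact ⟨u, 0, Or.inr rfl, fun i => Or.inl ⟨rfl, (hu i).1, (hu i).2⟩⟩

end StarHelly

namespace SP

/-- The centre of the star. -/
def cen : SP := ⟨(0, 0), Or.inl rfl⟩

/-- Metric hyperconvexity of the star for the `ℓ1` metric. -/
lemma metric_hc (s : Set (SP × ℝ)) (hr : ∀ p ∈ s, 0 ≤ p.2)
    (hpair : ∀ p ∈ s, ∀ q ∈ s, dd p.1 q.1 ≤ p.2 + q.2) :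
    ∃ z : SP, ∀ p ∈ s, dd z p.1 ≤ p.2 := by
  set a : ↥s → ℝ := fun i => i.1.1.1.1 - (i.1.2 - |i.1.1.1.2|) with ha
  set b : ↥s → ℝ := fun i => i.1.1.1.1 + (i.1.2 - |i.1.1.1.2|) with hb
  set c : ↥s → ℝ := fun i => i.1.1.1.2 - (i.1.2 - |i.1.1.1.1|) with hc
  set e : ↥s → ℝ := fun i => i.1.1.1.2 + (i.1.2 - |i.1.1.1.1|) with he
  have key : ∀ i : ↥s, i.1.1.1.1 = 0 ∨ i.1.1.1.2 = 0 := fun i => i.1.1.2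
  have hr' : ∀ i : ↥s, 0 ≤ i.1.2 := fun i => hr i.1 i.2
  have H1 : ∀ i, a i ≤ b i ∨ c i ≤ e i := by
    intro i
    rcases key i with h | h
    · right; simp only [hc, he, h, abs_zero]; linarith [hr' i]
    · left; simp only [ha, hb, h, abs_zero]; linarith [hr' i]
  have H2 : ∀ i, a i ≤ b i → c i ≤ e i → a i ≤ 0 ∧ 0 ≤ b i ∧ c i ≤ 0 ∧ 0 ≤ e i := by
    intro i hab hce
    simp only [ha, hb] at hab
    simp only [hc, he] at hce
    have h2 : |i.1.1.1.2| ≤ i.1.2 := by linarith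
    have h1 : |i.1.1.1.1| ≤ i.1.2 := by linarith
    have hsum : |i.1.1.1.1| + |i.1.1.1.2| ≤ i.1.2 := by
      rcases key i with h | h <;> simp [h] <;> assumption
    refine ⟨?_, ?_, ?_, ?_⟩ <;> simp only [ha, hb, hc, he] <;>
      linarith [le_abs_self i.1.1.1.1, neg_abs_le i.1.1.1.1,
        le_abs_self i.1.1.1.2, neg_abs_le i.1.1.1.2]
  have H3 : ∀ i j, (max (a i) (a j) ≤ min (b i) (b j)) ∨
      (max (c i) (c j) ≤ min (e i) (e j)) := by
    intro i j
    have hd := hpair i.1 i.2 j.1 j.2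
    rw [dd] at hd
    rcases key i with hx | hx <;> rcases key j with hy | hy
    · -- both on y-axis
      right
      simp only [hx, hy, sub_zero, sub_self, abs_zero] at hd
      simp only [max_le_iff, le_min_iff, hc, he, hx, hy, abs_zero]
      have := abs_sub_abs_le_abs_sub i.1.1.1.2 j.1.1.1.2
      refine ⟨⟨?_, ?_⟩, ?_, ?_⟩ <;>
        linarith [le_abs_self (i.1.1.1.2 - j.1.1.1.2), neg_abs_le (i.1.1.1.2 - j.1.1.1.2),
          hr' i, hr' j]
    · -- i on y-axis, j on x-axis
      simp only [hx, hy, zero_sub, sub_zero, abs_neg] at hd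
      by_cases hcase : |j.1.1.1.1| ≤ j.1.2
      · right
        simp only [max_le_iff, le_min_iff, hc, he, hx, hy, abs_zero]
        refine ⟨⟨?_, ?_⟩, ?_, ?_⟩ <;>
          linarith [le_abs_self i.1.1.1.2, neg_abs_le i.1.1.1.2,
            le_abs_self j.1.1.1.1, neg_abs_le j.1.1.1.1, hr' i, hr' j]
      · left
        push_neg at hcase
        have hj1 : |i.1.1.1.2| ≤ i.1.2 := by linarith [abs_nonneg j.1.1.1.1]
        simp only [max_le_iff, le_min_iff, ha, hb, hx, hy, abs_zero]
        refine ⟨⟨?_, ?_⟩, ?_, ?_⟩ <;>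
          linarith [le_abs_self i.1.1.1.2, neg_abs_le i.1.1.1.2,
            le_abs_self j.1.1.1.1, neg_abs_le j.1.1.1.1, hr' i, hr' j]
    · -- i on x-axis, j on y-axis
      simp only [hx, hy, zero_sub, sub_zero, abs_neg] at hd
      by_cases hcase : |i.1.1.1.1| ≤ i.1.2
      · right
        simp only [max_le_iff, le_min_iff, hc, he, hx, hy, abs_zero]
        refine ⟨⟨?_, ?_⟩, ?_, ?_⟩ <;>
          linarith [le_abs_self j.1.1.1.2, neg_abs_le j.1.1.1.2,
            le_abs_self i.1.1.1.1, neg_abs_le i.1.1.1.1, hr' i, hr' j]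
      · left
        push_neg at hcase
        have hi1 : |j.1.1.1.2| ≤ j.1.2 := by linarith [abs_nonneg i.1.1.1.1]
        simp only [max_le_iff, le_min_iff, ha, hb, hx, hy, abs_zero]
        refine ⟨⟨?_, ?_⟩, ?_, ?_⟩ <;>
          linarith [le_abs_self j.1.1.1.2, neg_abs_le j.1.1.1.2,
            le_abs_self i.1.1.1.1, neg_abs_le i.1.1.1.1, hr' i, hr' j]
    · -- both on x-axis
      left
      simp only [hx, hy, sub_zero, sub_self, abs_zero] at hd
      simp only [max_le_iff, le_min_iff, ha, hb, hx, hy, abs_zero]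
      refine ⟨⟨?_, ?_⟩, ?_, ?_⟩ <;>
        linarith [le_abs_self (i.1.1.1.1 - j.1.1.1.1), neg_abs_le (i.1.1.1.1 - j.1.1.1.1),
          hr' i, hr' j]
  obtain ⟨u, v, huv, hmem⟩ := starHelly a b c e H1 H2 H3
  refine ⟨⟨(u, v), huv⟩, ?_⟩
  rintro p hp
  rcases hmem ⟨p, hp⟩ with ⟨hv, h1, h2⟩ | ⟨hu, h1, h2⟩
  · simp only [ha, hb] at h1 h2
    rw [dd]
    have : |u - p.1.1.1| ≤ p.2 - |p.1.1.2| := abs_sub_le_iff.mpr ⟨by linarith, by linarith⟩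
    have h3 : |v - p.1.1.2| = |p.1.1.2| := by rw [hv, zero_sub, abs_neg]
    simp only [h3]
    linarith
  · simp only [hc, he] at h1 h2
    rw [dd]
    have : |v - p.1.1.2| ≤ p.2 - |p.1.1.1| := abs_sub_le_iff.mpr ⟨by linarith, by linarith⟩
    have h3 : |u - p.1.1.1| = |p.1.1.1| := by rw [hu, zero_sub, abs_neg]
    simp only [h3]
    linarith

end SP

namespace SP
variable {Y Z : Finset SP}

noncomputable def hwx (A : Finset SP) : ℝ := max (Mx A) 0 - min (mx A) 0
noncomputable def hwy (A : Finset SP) : ℝ := max (My A) 0 - min (my A) 0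

lemma hwx_nonneg (A : Finset SP) : 0 ≤ hwx A := by
  unfold hwx; have := le_max_right (Mx A) 0; have := min_le_right (mx A) 0; linarith
lemma hwy_nonneg (A : Finset SP) : 0 ≤ hwy A := by
  unfold hwy; have := le_max_right (My A) 0; have := min_le_right (my A) 0; linarith

/-- Classification of a nonempty star subset: on the x-axis, on the y-axis, or
straddling the centre in both coordinates. -/
lemma classify (hY : Y.Nonempty) :
    (∀ p ∈ Y, p.1.2 = 0) ∨ (∀ p ∈ Y, p.1.1 = 0) ∨
      (mx Y ≤ 0 ∧ 0 ≤ Mx Y ∧ my Y ≤ 0 ∧ 0 ≤ My Y) := by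
  by_cases hx : ∀ p ∈ Y, p.1.2 = 0
  · exact Or.inl hx
  · by_cases hy : ∀ p ∈ Y, p.1.1 = 0
    · exact Or.inr (Or.inl hy)
    · push_neg at hx hy
      obtain ⟨p, hp, hp2⟩ := hx
      obtain ⟨q, hq, hq2⟩ := hy
      have hp1 : p.1.1 = 0 := p.2.resolve_right hp2
      have hq2' : q.1.2 = 0 := q.2.resolve_left hq2
      refine Or.inr (Or.inr ⟨?_, ?_, ?_, ?_⟩)
      · exact hp1 ▸ mx_le hp
      · exact hp1 ▸ le_Mx hp
      · exact hq2' ▸ my_le hq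
      · exact hq2' ▸ le_My hq

lemma xaxis_My (hY : Y.Nonempty) (h : ∀ p ∈ Y, p.1.2 = 0) : My Y = 0 ∧ my Y = 0 := by
  obtain ⟨p, hp⟩ := hY
  constructor
  · exact le_antisymm ((My_le_iff ⟨p, hp⟩).2 fun q hq => (h q hq).le)
      ((h p hp) ▸ le_My hp)
  · exact le_antisymm ((h p hp) ▸ my_le hp)
      ((le_my_iff ⟨p, hp⟩).2 fun q hq => (h q hq).ge)

lemma yaxis_Mx (hY : Y.Nonempty) (h : ∀ p ∈ Y, p.1.1 = 0) : Mx Y = 0 ∧ mx Y = 0 := by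
  obtain ⟨p, hp⟩ := hY
  constructor
  · exact le_antisymm ((Mx_le_iff ⟨p, hp⟩).2 fun q hq => (h q hq).le)
      ((h p hp) ▸ le_Mx hp)
  · exact le_antisymm ((h p hp) ▸ mx_le hp)
      ((le_mx_iff ⟨p, hp⟩).2 fun q hq => (h q hq).ge)

lemma Mx_union (hY : Y.Nonempty) (hZ : Z.Nonempty) : Mx (Y ∪ Z) = max (Mx Y) (Mx Z) := by
  rw [Mx, Mx, Mx, dif_pos hY, dif_pos hZ, dif_pos (hY.mono Finset.subset_union_left)]
  exact Finset.sup'_union hY hZ _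
lemma mx_union (hY : Y.Nonempty) (hZ : Z.Nonempty) : mx (Y ∪ Z) = min (mx Y) (mx Z) := by
  rw [mx, mx, mx, dif_pos hY, dif_pos hZ, dif_pos (hY.mono Finset.subset_union_left)]
  exact Finset.inf'_union hY hZ _
lemma My_union (hY : Y.Nonempty) (hZ : Z.Nonempty) : My (Y ∪ Z) = max (My Y) (My Z) := by
  rw [My, My, My, dif_pos hY, dif_pos hZ, dif_pos (hY.mono Finset.subset_union_left)]
  exact Finset.sup'_union hY hZ _
lemma my_union (hY : Y.Nonempty) (hZ : Z.Nonempty) : my (Y ∪ Z) = min (my Y) (my Z) := by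
  rw [my, my, my, dif_pos hY, dif_pos hZ, dif_pos (hY.mono Finset.subset_union_left)]
  exact Finset.inf'_union hY hZ _

lemma Mx_insert {z : SP} (hY : Y.Nonempty) : Mx (insert z Y) = max z.1.1 (Mx Y) := by
  rw [Mx, Mx, dif_pos hY, dif_pos (hY.mono (Finset.subset_insert z Y))]
  exact Finset.sup'_insert (H := hY) (f := fun p : SP => p.1.1)
lemma mx_insert {z : SP} (hY : Y.Nonempty) : mx (insert z Y) = min z.1.1 (mx Y) := by
  rw [mx, mx, dif_pos hY, dif_pos (hY.mono (Finset.subset_insert z Y))]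
  exact Finset.inf'_insert (H := hY) (f := fun p : SP => p.1.1)
lemma My_insert {z : SP} (hY : Y.Nonempty) : My (insert z Y) = max z.1.2 (My Y) := by
  rw [My, My, dif_pos hY, dif_pos (hY.mono (Finset.subset_insert z Y))]
  exact Finset.sup'_insert (H := hY) (f := fun p : SP => p.1.2)
lemma my_insert {z : SP} (hY : Y.Nonempty) : my (insert z Y) = min z.1.2 (my Y) := by
  rw [my, my, dif_pos hY, dif_pos (hY.mono (Finset.subset_insert z Y))]
  exact Finset.inf'_insert (H := hY) (f := fun p : SP => p.1.2)

/-- Hyperconvexity of the Steiner diversity `sst` on the star. -/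
lemma sst_hc (r : Finset SP → ℝ)
    (hsingle : ∀ Y : Finset SP, sst Y ≤ r Y)
    (hpair : ∀ Y Z : Finset SP, sst (Y ∪ Z) ≤ r Y + r Z) :
    ∃ z : SP, ∀ Y : Finset SP, sst (insert z Y) ≤ r Y := by
  classical
  set ι := {Y : Finset SP // Y.Nonempty} with hι
  set Cx : ι → Prop := fun i => Mx i.1 - mx i.1 ≤ r i.1 - hwy i.1 with hCx
  set Cy : ι → Prop := fun i => My i.1 - my i.1 ≤ r i.1 - hwx i.1 with hCy
  set a : ι → ℝ := fun i => if Cx i then Mx i.1 - (r i.1 - hwy i.1) else 1 with hadef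
  set b : ι → ℝ := fun i => if Cx i then mx i.1 + (r i.1 - hwy i.1) else 0 with hbdef
  set c : ι → ℝ := fun i => if Cy i then My i.1 - (r i.1 - hwx i.1) else 1 with hcdef
  set e : ι → ℝ := fun i => if Cy i then my i.1 + (r i.1 - hwx i.1) else 0 with hedef
  -- basic facts for each index
  have wx_nonneg : ∀ i : ι, 0 ≤ Mx i.1 - mx i.1 := fun i => by linarith [mx_le_Mx i.2]
  have wy_nonneg : ∀ i : ι, 0 ≤ My i.1 - my i.1 := fun i => by linarith [my_le_My i.2]
  have sst_eq : ∀ i : ι, sst i.1 = (Mx i.1 - mx i.1) + (My i.1 - my i.1) := fun i => rfl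
  -- per-class facts
  have hXfact : ∀ i : ι, (∀ p ∈ i.1, p.1.2 = 0) →
      My i.1 = 0 ∧ my i.1 = 0 ∧ hwy i.1 = 0 ∧ hwx i.1 = max (Mx i.1) 0 - min (mx i.1) 0 := by
    intro i h
    obtain ⟨h1, h2⟩ := xaxis_My i.2 h
    exact ⟨h1, h2, by simp [hwy, h1, h2], rfl⟩
  have hYfact : ∀ i : ι, (∀ p ∈ i.1, p.1.1 = 0) →
      Mx i.1 = 0 ∧ mx i.1 = 0 ∧ hwx i.1 = 0 ∧ hwy i.1 = max (My i.1) 0 - min (my i.1) 0 := by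
    intro i h
    obtain ⟨h1, h2⟩ := yaxis_Mx i.2 h
    exact ⟨h1, h2, by simp [hwx, h1, h2], rfl⟩
  have hMfact : ∀ i : ι, (mx i.1 ≤ 0 ∧ 0 ≤ Mx i.1 ∧ my i.1 ≤ 0 ∧ 0 ≤ My i.1) →
      hwx i.1 = Mx i.1 - mx i.1 ∧ hwy i.1 = My i.1 - my i.1 := by
    intro i ⟨h1, h2, h3, h4⟩
    constructor
    · unfold hwx; rw [max_eq_left h2, min_eq_left h1]
    · unfold hwy; rw [max_eq_left h4, min_eq_left h3]
  -- every index satisfies Cx or Cy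
  have H1' : ∀ i : ι, Cx i ∨ Cy i := by
    intro i
    rcases classify i.2 with h | h | h
    · obtain ⟨h1, h2, h3, _⟩ := hXfact i h
      left; simp only [hCx, h3]; simpa [sst, h1, h2] using hsingle i.1
    · obtain ⟨h1, h2, h3, _⟩ := hYfact i h
      right; simp only [hCy, h3]; simpa [sst, h1, h2] using hsingle i.1
    · obtain ⟨h1, h2⟩ := hMfact i h
      left; simp only [hCx]
      have := hsingle i.1; rw [sst_eq i] at this; simp only [h2] at this ⊢; linarith
  have H1 : ∀ i : ι, a i ≤ b i ∨ c i ≤ e i := by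
    intro i
    rcases H1' i with h | h
    · left; simp only [hadef, hbdef, if_pos h]
      have h' := h; simp only [hCx] at h'; linarith [wx_nonneg i, wy_nonneg i]
    · right; simp only [hcdef, hedef, if_pos h]
      have h' := h; simp only [hCy] at h'; linarith [wy_nonneg i, wx_nonneg i]
  have H2 : ∀ i, a i ≤ b i → c i ≤ e i → a i ≤ 0 ∧ 0 ≤ b i ∧ c i ≤ 0 ∧ 0 ≤ e i := by
    intro i hab hce
    have hcx : Cx i := by
      by_contra hc; simp only [hadef, hbdef, if_neg hc] at hab; linarith
    have hcy : Cy i := by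
      by_contra hc; simp only [hcdef, hedef, if_neg hc] at hce; linarith
    have key : hwx i.1 + hwy i.1 ≤ r i.1 := by
      rcases classify i.2 with h | h | h
      · obtain ⟨h1, h2, h3, _⟩ := hXfact i h
        have hcy' := hcy; simp only [hCy, h1, h2] at hcy'; linarith
      · obtain ⟨h1, h2, h3, _⟩ := hYfact i h
        have hcx' := hcx; simp only [hCx, h1, h2] at hcx'; linarith
      · obtain ⟨h1, h2⟩ := hMfact i h
        have := hsingle i.1; rw [sst_eq i] at this; linarith
    have hMxle : Mx i.1 ≤ hwx i.1 := by
      unfold hwx; have := le_max_left (Mx i.1) 0; have := min_le_right (mx i.1) 0; linarith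
    have hmxge : -(mx i.1) ≤ hwx i.1 := by
      unfold hwx; have := le_max_right (Mx i.1) 0; have := min_le_left (mx i.1) 0; linarith
    have hMyle : My i.1 ≤ hwy i.1 := by
      unfold hwy; have := le_max_left (My i.1) 0; have := min_le_right (my i.1) 0; linarith
    have hmyge : -(my i.1) ≤ hwy i.1 := by
      unfold hwy; have := le_max_right (My i.1) 0; have := min_le_left (my i.1) 0; linarith
    refine ⟨?_, ?_, ?_, ?_⟩
    · simp only [hadef, if_pos hcx]; linarith
    · simp only [hbdef, if_pos hcx]; linarith
    · simp only [hcdef, if_pos hcy]; linarith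
    · simp only [hedef, if_pos hcy]; linarith
  -- pairwise admissibility in width form
  have SS : ∀ i : ι, (Mx i.1 - mx i.1) + (My i.1 - my i.1) ≤ r i.1 := by
    intro i; rw [← sst_eq i]; exact hsingle i.1
  have pairw : ∀ i j : ι, (max (Mx i.1) (Mx j.1) - min (mx i.1) (mx j.1))
      + (max (My i.1) (My j.1) - min (my i.1) (my j.1)) ≤ r i.1 + r j.1 := by
    intro i j
    have h := hpair i.1 j.1
    rwa [sst, Mx_union i.2 j.2, mx_union i.2 j.2, My_union i.2 j.2, my_union i.2 j.2] at h
  have Mxle : ∀ i : ι, Mx i.1 ≤ hwx i.1 := by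
    intro i; unfold hwx
    have := le_max_left (Mx i.1) 0; have := min_le_right (mx i.1) 0; linarith
  have mxge : ∀ i : ι, -(mx i.1) ≤ hwx i.1 := by
    intro i; unfold hwx
    have := le_max_right (Mx i.1) 0; have := min_le_left (mx i.1) 0; linarith
  have Myle : ∀ i : ι, My i.1 ≤ hwy i.1 := by
    intro i; unfold hwy
    have := le_max_left (My i.1) 0; have := min_le_right (my i.1) 0; linarith
  have myge : ∀ i : ι, -(my i.1) ≤ hwy i.1 := by
    intro i; unfold hwy
    have := le_max_right (My i.1) 0; have := min_le_left (my i.1) 0; linarith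
  have H3 : ∀ i j, (max (a i) (a j) ≤ min (b i) (b j)) ∨
      (max (c i) (c j) ≤ min (e i) (e j)) := by
    have symm3 : ∀ i j, (max (a i) (a j) ≤ min (b i) (b j) ∨
        max (c i) (c j) ≤ min (e i) (e j)) →
        (max (a j) (a i) ≤ min (b j) (b i) ∨ max (c j) (c i) ≤ min (e j) (e i)) := by
      intro i j h
      rwa [max_comm (a j), min_comm (b j), max_comm (c j), min_comm (e j)]
    -- helper: both on x-axis
    have hxx : ∀ i j, (∀ p ∈ i.1, p.1.2 = 0) → (∀ p ∈ j.1, p.1.2 = 0) →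
        (max (a i) (a j) ≤ min (b i) (b j)) ∨ (max (c i) (c j) ≤ min (e i) (e j)) := by
      intro i j hi hj
      obtain ⟨fi1, fi2, fi3, _⟩ := hXfact i hi
      obtain ⟨fj1, fj2, fj3, _⟩ := hXfact j hj
      have ci : Cx i := by simp only [hCx, fi3]; linarith [SS i, fi1 ▸ fi2 ▸ (SS i)]
      have cj : Cx j := by simp only [hCx, fj3]; linarith [SS j]
      have pij := pairw i j
      left
      simp only [max_le_iff, le_min_iff, hadef, hbdef, if_pos ci, if_pos cj, fi3, fj3]
      refine ⟨⟨?_, ?_⟩, ?_, ?_⟩ <;>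
        linarith [le_max_left (Mx i.1) (Mx j.1), le_max_right (Mx i.1) (Mx j.1),
          min_le_left (mx i.1) (mx j.1), min_le_right (mx i.1) (mx j.1),
          le_max_left (My i.1) (My j.1), le_max_right (My i.1) (My j.1),
          min_le_left (my i.1) (my j.1), min_le_right (my i.1) (my j.1),
          SS i, SS j, wx_nonneg i, wx_nonneg j, mx_le_Mx i.2, mx_le_Mx j.2]
    -- helper: i on x-axis, j mixed
    have hxm : ∀ i j, (∀ p ∈ i.1, p.1.2 = 0) →
        (mx j.1 ≤ 0 ∧ 0 ≤ Mx j.1 ∧ my j.1 ≤ 0 ∧ 0 ≤ My j.1) →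
        (max (a i) (a j) ≤ min (b i) (b j)) ∨ (max (c i) (c j) ≤ min (e i) (e j)) := by
      intro i j hi hj
      obtain ⟨fi1, fi2, fi3, _⟩ := hXfact i hi
      obtain ⟨gj1, gj2⟩ := hMfact j hj
      have ci : Cx i := by simp only [hCx, fi3]; linarith [SS i]
      have cj : Cx j := by simp only [hCx, gj2]; linarith [SS j]
      have pij := pairw i j
      left
      simp only [max_le_iff, le_min_iff, hadef, hbdef, if_pos ci, if_pos cj, fi3, gj2]
      refine ⟨⟨?_, ?_⟩, ?_, ?_⟩ <;>
        linarith [le_max_left (Mx i.1) (Mx j.1), le_max_right (Mx i.1) (Mx j.1),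
          min_le_left (mx i.1) (mx j.1), min_le_right (mx i.1) (mx j.1),
          le_max_right (My i.1) (My j.1), min_le_right (my i.1) (my j.1),
          SS i, SS j, wx_nonneg i, wx_nonneg j, wy_nonneg i, wy_nonneg j,
          mx_le_Mx i.2, mx_le_Mx j.2]
    -- helper: both mixed
    have hmm : ∀ i j, (mx i.1 ≤ 0 ∧ 0 ≤ Mx i.1 ∧ my i.1 ≤ 0 ∧ 0 ≤ My i.1) →
        (mx j.1 ≤ 0 ∧ 0 ≤ Mx j.1 ∧ my j.1 ≤ 0 ∧ 0 ≤ My j.1) →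
        (max (a i) (a j) ≤ min (b i) (b j)) ∨ (max (c i) (c j) ≤ min (e i) (e j)) := by
      intro i j hi hj
      obtain ⟨gi1, gi2⟩ := hMfact i hi
      obtain ⟨gj1, gj2⟩ := hMfact j hj
      have ci : Cx i := by simp only [hCx, gi2]; linarith [SS i]
      have cj : Cx j := by simp only [hCx, gj2]; linarith [SS j]
      left
      simp only [max_le_iff, le_min_iff, hadef, hbdef, if_pos ci, if_pos cj, gi2, gj2]
      refine ⟨⟨?_, ?_⟩, ?_, ?_⟩ <;>
        linarith [SS i, SS j, hi.1, hi.2.1, hi.2.2.1, hi.2.2.2, hj.1, hj.2.1, hj.2.2.1, hj.2.2.2]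
    -- helper: both on y-axis
    have hyy : ∀ i j, (∀ p ∈ i.1, p.1.1 = 0) → (∀ p ∈ j.1, p.1.1 = 0) →
        (max (a i) (a j) ≤ min (b i) (b j)) ∨ (max (c i) (c j) ≤ min (e i) (e j)) := by
      intro i j hi hj
      obtain ⟨fi1, fi2, fi3, _⟩ := hYfact i hi
      obtain ⟨fj1, fj2, fj3, _⟩ := hYfact j hj
      have ci : Cy i := by simp only [hCy, fi3]; linarith [SS i]
      have cj : Cy j := by simp only [hCy, fj3]; linarith [SS j]
      have pij := pairw i j
      right
      simp only [max_le_iff, le_min_iff, hcdef, hedef, if_pos ci, if_pos cj, fi3, fj3]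
      refine ⟨⟨?_, ?_⟩, ?_, ?_⟩ <;>
        linarith [le_max_left (My i.1) (My j.1), le_max_right (My i.1) (My j.1),
          min_le_left (my i.1) (my j.1), min_le_right (my i.1) (my j.1),
          le_max_left (Mx i.1) (Mx j.1), min_le_left (mx i.1) (mx j.1),
          SS i, SS j, wy_nonneg i, wy_nonneg j, my_le_My i.2, my_le_My j.2]
    -- helper: i on y-axis, j mixed
    have hym : ∀ i j, (∀ p ∈ i.1, p.1.1 = 0) →
        (mx j.1 ≤ 0 ∧ 0 ≤ Mx j.1 ∧ my j.1 ≤ 0 ∧ 0 ≤ My j.1) →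
        (max (a i) (a j) ≤ min (b i) (b j)) ∨ (max (c i) (c j) ≤ min (e i) (e j)) := by
      intro i j hi hj
      obtain ⟨fi1, fi2, fi3, _⟩ := hYfact i hi
      obtain ⟨gj1, gj2⟩ := hMfact j hj
      have ci : Cy i := by simp only [hCy, fi3]; linarith [SS i]
      have cj : Cy j := by simp only [hCy, gj1]; linarith [SS j]
      have pij := pairw i j
      right
      simp only [max_le_iff, le_min_iff, hcdef, hedef, if_pos ci, if_pos cj, fi3, gj1]
      refine ⟨⟨?_, ?_⟩, ?_, ?_⟩ <;>
        linarith [le_max_left (My i.1) (My j.1), le_max_right (My i.1) (My j.1),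
          min_le_left (my i.1) (my j.1), min_le_right (my i.1) (my j.1),
          le_max_right (Mx i.1) (Mx j.1), min_le_right (mx i.1) (mx j.1),
          SS i, SS j, wy_nonneg i, wy_nonneg j, wx_nonneg i, wx_nonneg j,
          my_le_My i.2, my_le_My j.2]
    -- helper: i on x-axis, j on y-axis
    have hxy : ∀ i j, (∀ p ∈ i.1, p.1.2 = 0) → (∀ p ∈ j.1, p.1.1 = 0) →
        (max (a i) (a j) ≤ min (b i) (b j)) ∨ (max (c i) (c j) ≤ min (e i) (e j)) := by
      intro i j hi hj
      obtain ⟨fi1, fi2, fi3, fi4⟩ := hXfact i hi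
      obtain ⟨fj1, fj2, fj3, fj4⟩ := hYfact j hj
      have pij := pairw i j
      rw [fi1, fi2, fj1, fj2] at pij
      have pij' : hwx i.1 + hwy j.1 ≤ r i.1 + r j.1 := by
        rw [fi4, fj4]
        have e1 : max (Mx i.1) 0 = max (Mx i.1) (0:ℝ) := rfl
        have e2 : max (0:ℝ) (My j.1) = max (My j.1) 0 := max_comm _ _
        have e3 : min (0:ℝ) (my j.1) = min (my j.1) 0 := min_comm _ _
        linarith [pij]
      by_cases hci : hwx i.1 ≤ r i.1
      · right
        have ci : Cy i := by simp only [hCy, fi1, fi2]; linarith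
        have cj : Cy j := by simp only [hCy, fj3]; linarith [SS j]
        simp only [max_le_iff, le_min_iff, hcdef, hedef, if_pos ci, if_pos cj, fi1, fi2, fj3]
        refine ⟨⟨?_, ?_⟩, ?_, ?_⟩ <;>
          linarith [Myle j, myge j, SS j, wy_nonneg j, hwx_nonneg i.1, hwy_nonneg j.1]
      · left
        push_neg at hci
        have hwyj : hwy j.1 ≤ r j.1 := by linarith [pij']
        have ci : Cx i := by simp only [hCx, fi3]; linarith [SS i]
        have cj : Cx j := by simp only [hCx, fj1, fj2]; linarith
        simp only [max_le_iff, le_min_iff, hadef, hbdef, if_pos ci, if_pos cj, fi3, fj1, fj2]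
        refine ⟨⟨?_, ?_⟩, ?_, ?_⟩ <;>
          linarith [Mxle i, mxge i, SS i, wx_nonneg i, hwy_nonneg j.1, hwx_nonneg i.1]
    intro i j
    rcases classify i.2 with hi | hi | hi <;> rcases classify j.2 with hj | hj | hj
    · exact hxx i j hi hj
    · exact hxy i j hi hj
    · exact hxm i j hi hj
    · exact symm3 j i (hxy j i hj hi)
    · exact hyy i j hi hj
    · exact hym i j hi hj
    · exact symm3 j i (hxm j i hj hi)
    · exact symm3 j i (hym j i hj hi)
    · exact hmm i j hi hj
  obtain ⟨u, v, huv, hmem⟩ := starHelly a b c e H1 H2 H3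
  refine ⟨⟨(u, v), huv⟩, ?_⟩
  intro Y
  rcases Y.eq_empty_or_nonempty with rfl | hY
  · have h1 : insert (⟨(u, v), huv⟩ : SP) (∅ : Finset SP) = {⟨(u, v), huv⟩} := rfl
    rw [h1, sst_singleton]
    have := hsingle (∅ : Finset SP); rw [sst_empty] at this; linarith
  · have hwxy : mx Y ≤ Mx Y := mx_le_Mx hY
    have hwxy' : my Y ≤ My Y := my_le_My hY
    rcases hmem ⟨Y, hY⟩ with ⟨hv, h1, h2⟩ | ⟨hu, h1, h2⟩
    · have hcx : Cx ⟨Y, hY⟩ := by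
        by_contra hc; simp only [hadef, hbdef, if_neg hc] at h1 h2; linarith
      simp only [hadef, hbdef, if_pos hcx] at h1 h2
      have hcx' := hcx; simp only [hCx] at hcx'
      rw [sst, Mx_insert hY, mx_insert hY, My_insert hY, my_insert hY]
      show max u (Mx Y) - min u (mx Y) + (max v (My Y) - min v (my Y)) ≤ r Y
      rw [hv]
      have hB : max (0:ℝ) (My Y) - min (0:ℝ) (my Y) = hwy Y := by
        unfold hwy; rw [max_comm, min_comm]
      have hA : max u (Mx Y) - min u (mx Y) ≤ r Y - hwy Y := by
        rcases max_cases u (Mx Y) with ⟨e1, _⟩ | ⟨e1, _⟩ <;>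
          rcases min_cases u (mx Y) with ⟨e2, _⟩ | ⟨e2, _⟩ <;> rw [e1, e2] <;> linarith
      linarith
    · have hcy : Cy ⟨Y, hY⟩ := by
        by_contra hc; simp only [hcdef, hedef, if_neg hc] at h1 h2; linarith
      simp only [hcdef, hedef, if_pos hcy] at h1 h2
      have hcy' := hcy; simp only [hCy] at hcy'
      rw [sst, Mx_insert hY, mx_insert hY, My_insert hY, my_insert hY]
      show max u (Mx Y) - min u (mx Y) + (max v (My Y) - min v (my Y)) ≤ r Y
      rw [hu]
      have hB : max (0:ℝ) (Mx Y) - min (0:ℝ) (mx Y) = hwx Y := by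
        unfold hwx; rw [max_comm, min_comm]
      have hA : max v (My Y) - min v (my Y) ≤ r Y - hwx Y := by
        rcases max_cases v (My Y) with ⟨e1, _⟩ | ⟨e1, _⟩ <;>
          rcases min_cases v (my Y) with ⟨e2, _⟩ | ⟨e2, _⟩ <;> rw [e1, e2] <;> linarith
      linarith

end SP

namespace SP

/-- Hyperconvexity of the diameter diversity `sdm` on the star. -/
lemma sdm_hc (r : Finset SP → ℝ)
    (hsingle : ∀ Y : Finset SP, sdm Y ≤ r Y)
    (hpair : ∀ Y Z : Finset SP, sdm (Y ∪ Z) ≤ r Y + r Z) :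
    ∃ z : SP, ∀ Y : Finset SP, sdm (insert z Y) ≤ r Y := by
  classical
  have hr_nonneg : ∀ Y : Finset SP, 0 ≤ r Y := fun Y => le_trans (sdm_nonneg Y) (hsingle Y)
  set S : SP → Set ℝ := fun y => {t | ∃ Y : Finset SP, y ∈ Y ∧ t = r Y} with hS
  have hSne : ∀ y, (S y).Nonempty := fun y => ⟨r {y}, {y}, Finset.mem_singleton_self y, rfl⟩
  have hSbd : ∀ y, ∀ t ∈ S y, (0:ℝ) ≤ t := by
    rintro y t ⟨Y, _, rfl⟩; exact hr_nonneg Y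
  set ρ : SP → ℝ := fun y => sInf (S y) with hρ
  have hρ_nonneg : ∀ y, 0 ≤ ρ y := fun y => Real.sInf_nonneg (hSbd y)
  have hρ_le : ∀ y (Y : Finset SP), y ∈ Y → ρ y ≤ r Y := by
    intro y Y hy
    exact csInf_le ⟨0, fun t ht => hSbd y t ht⟩ ⟨Y, hy, rfl⟩
  have hdd : ∀ y y' : SP, dd y y' ≤ ρ y + ρ y' := by
    intro y y'
    have key : ∀ t ∈ S y, ∀ t' ∈ S y', dd y y' ≤ t + t' := by
      rintro t ⟨Y, hy, rfl⟩ t' ⟨Z, hy', rfl⟩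
      exact le_trans (dd_le_sdm (Finset.mem_union_left _ hy) (Finset.mem_union_right _ hy'))
        (hpair Y Z)
    have h1 : dd y y' - ρ y' ≤ ρ y := by
      apply le_csInf (hSne y)
      intro t ht
      have h2 : dd y y' - t ≤ ρ y' := by
        apply le_csInf (hSne y')
        intro t' ht'
        linarith [key t ht t' ht']
      linarith
    linarith
  obtain ⟨z, hz⟩ := metric_hc (Set.range fun y : SP => (y, ρ y))
    (by rintro p ⟨y, rfl⟩; exact hρ_nonneg y)
    (by rintro p ⟨y, rfl⟩ q ⟨y', rfl⟩; exact hdd y y')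
  refine ⟨z, fun Y => ?_⟩
  rcases Y.eq_empty_or_nonempty with rfl | hY
  · have h1 : insert z (∅ : Finset SP) = {z} := rfl
    rw [h1, sdm_singleton]
    exact hr_nonneg _
  · rw [sdm_le_iff (hY.mono (Finset.subset_insert z Y))]
    intro p hp q hq
    rcases Finset.mem_insert.mp hp with rfl | hp' <;> rcases Finset.mem_insert.mp hq with hq1 | hq'
    · rw [hq1, dd_self]; exact hr_nonneg Y
    · exact le_trans (hz (q, ρ q) ⟨q, rfl⟩) (hρ_le q Y hq')
    · rw [hq1, dd_comm]
      exact le_trans (hz (p, ρ p) ⟨p, rfl⟩) (hρ_le p Y hp')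
    · exact le_trans (dd_le_sdm hp' hq') (hsingle Y)
end SP

section ProductConstruction
open SP

abbrev XT : Type := SP × SP

noncomputable instance : DecidableEq XT := Classical.decEq _

/-- The product diversity: diameter diversity on the first factor, Steiner diversity
on the second. -/
noncomputable def pdelta (A : Finset XT) : ℝ :=
  max (sdm (A.image Prod.fst)) (sst (A.image Prod.snd))

lemma pdelta_nonneg (A : Finset XT) : 0 ≤ pdelta A :=
  le_trans (sdm_nonneg _) (le_max_left _ _)

lemma pdelta_pair (p q : XT) : pdelta {p, q} = max (dd p.1 q.1) (dd p.2 q.2) := by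
  have h1 : ({p, q} : Finset XT).image Prod.fst = {p.1, q.1} := by
    rw [show ({p, q} : Finset XT) = insert p {q} from rfl, Finset.image_insert,
      Finset.image_singleton]
  have h2 : ({p, q} : Finset XT).image Prod.snd = {p.2, q.2} := by
    rw [show ({p, q} : Finset XT) = insert p {q} from rfl, Finset.image_insert,
      Finset.image_singleton]
  rw [pdelta, h1, h2, sdm_pair, sst_pair]

/-- The diversity structure on the product. -/
noncomputable def DP : Diversity XT where
  delta := pdelta
  nonneg := pdelta_nonneg
  eq_zero_iff := by
    intro A
    constructor
    · intro h
      have h1 : sdm (A.image Prod.fst) = 0 := by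
        have := le_max_left (sdm (A.image Prod.fst)) (sst (A.image Prod.snd))
        rw [pdelta] at h
        exact le_antisymm (h ▸ this) (sdm_nonneg _)
      have h2 : sst (A.image Prod.snd) = 0 := by
        have := le_max_right (sdm (A.image Prod.fst)) (sst (A.image Prod.snd))
        rw [pdelta] at h
        exact le_antisymm (h ▸ this) (sst_nonneg _)
      have c1 := sdm_eq_zero_iff.mp h1
      have c2 := sst_eq_zero_iff.mp h2
      have hsub : A ⊆ (A.image Prod.fst) ×ˢ (A.image Prod.snd) := by
        intro p hp
        exact Finset.mem_product.mpr ⟨Finset.mem_image_of_mem _ hp,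
          Finset.mem_image_of_mem _ hp⟩
      calc A.card ≤ _ := Finset.card_le_card hsub
        _ = (A.image Prod.fst).card * (A.image Prod.snd).card := Finset.card_product _ _
        _ ≤ 1 * 1 := Nat.mul_le_mul c1 c2
        _ = 1 := rfl
    · intro h
      have c1 : (A.image Prod.fst).card ≤ 1 := le_trans (Finset.card_image_le) h
      have c2 : (A.image Prod.snd).card ≤ 1 := le_trans (Finset.card_image_le) h
      rw [pdelta, sdm_eq_zero_iff.mpr c1, sst_eq_zero_iff.mpr c2, max_self]
  triangle := by
    intro A B C hB
    have hB1 : (B.image (Prod.fst : XT → SP)).Nonempty := hB.image _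
    have hB2 : (B.image (Prod.snd : XT → SP)).Nonempty := hB.image _
    rw [pdelta, Finset.image_union, Finset.image_union]
    apply max_le
    · calc sdm (A.image Prod.fst ∪ C.image Prod.fst)
          ≤ sdm (A.image Prod.fst ∪ B.image Prod.fst)
            + sdm (B.image Prod.fst ∪ C.image Prod.fst) := sdm_triangle hB1
        _ ≤ pdelta (A ∪ B) + pdelta (B ∪ C) := by
            apply add_le_add
            · rw [pdelta, Finset.image_union, Finset.image_union]; exact le_max_left _ _
            · rw [pdelta, Finset.image_union, Finset.image_union]; exact le_max_left _ _
    · calc sst (A.image Prod.snd ∪ C.image Prod.snd)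
          ≤ sst (A.image Prod.snd ∪ B.image Prod.snd)
            + sst (B.image Prod.snd ∪ C.image Prod.snd) := sst_triangle hB2
        _ ≤ pdelta (A ∪ B) + pdelta (B ∪ C) := by
            apply add_le_add
            · rw [pdelta, Finset.image_union, Finset.image_union]; exact le_max_right _ _
            · rw [pdelta, Finset.image_union, Finset.image_union]; exact le_max_right _ _

theorem DP_hyperconvex : DP.Hyperconvex := by
  intro r h0 hcoll
  have hsingle : ∀ Y : Finset XT, pdelta Y ≤ r Y := by
    intro Y
    have h := hcoll {Y}
    exact (by simpa [Finset.sup_singleton] using h : DP.delta Y ≤ r Y)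
  have hrnn : ∀ Y : Finset XT, 0 ≤ r Y := fun Y => le_trans (pdelta_nonneg Y) (hsingle Y)
  have hpair : ∀ Y Z : Finset XT, pdelta (Y ∪ Z) ≤ r Y + r Z := by
    intro Y Z
    by_cases hYZ : Y = Z
    · subst hYZ
      rw [Finset.union_self]
      linarith [hsingle Y, hrnn Y]
    · have h := hcoll {Y, Z}
      rw [show ({Y, Z} : Finset (Finset XT)) = insert Y {Z} from rfl] at h
      rw [Finset.sup_insert, Finset.sup_singleton, Finset.sum_insert
        (by simpa using hYZ)] at h
      exact (by simpa [Finset.sup_eq_union] using h : DP.delta (Y ∪ Z) ≤ r Y + r Z)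
  classical
  -- first factor
  set S1 : Finset SP → Set ℝ :=
    fun Bf => {t | ∃ Y : Finset XT, Y.image Prod.fst = Bf ∧ t = r Y} with hS1
  have hS1ne : ∀ Bf, (S1 Bf).Nonempty := by
    intro Bf
    refine ⟨r (Bf.image fun a => (a, cen)), ⟨Bf.image fun a => (a, cen), ?_, rfl⟩⟩
    rw [Finset.image_image]
    exact Finset.image_id'
  have hS1bd : ∀ Bf, ∀ t ∈ S1 Bf, (0:ℝ) ≤ t := by
    rintro Bf t ⟨Y, hY, rfl⟩; exact hrnn Y
  set r1 : Finset SP → ℝ := fun Bf => sInf (S1 Bf) with hr1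
  have hr1single : ∀ Bf, sdm Bf ≤ r1 Bf := by
    intro Bf
    apply le_csInf (hS1ne Bf)
    rintro t ⟨Y, hY, rfl⟩
    rw [← hY]
    exact le_trans (le_max_left _ _) (hsingle Y)
  have hr1pair : ∀ Bf Cf, sdm (Bf ∪ Cf) ≤ r1 Bf + r1 Cf := by
    intro Bf Cf
    have key : ∀ t ∈ S1 Bf, ∀ t' ∈ S1 Cf, sdm (Bf ∪ Cf) ≤ t + t' := by
      rintro t ⟨Y, hY, rfl⟩ t' ⟨Z, hZ, rfl⟩
      rw [← hY, ← hZ, ← Finset.image_union]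
      exact le_trans (le_max_left _ _) (hpair Y Z)
    have h1 : sdm (Bf ∪ Cf) - r1 Cf ≤ r1 Bf := by
      apply le_csInf (hS1ne Bf)
      intro t ht
      have h2 : sdm (Bf ∪ Cf) - t ≤ r1 Cf := by
        apply le_csInf (hS1ne Cf)
        intro t' ht'
        linarith [key t ht t' ht']
      linarith
    linarith
  obtain ⟨z1, hz1⟩ := sdm_hc r1 hr1single hr1pair
  -- second factor
  set S2 : Finset SP → Set ℝ :=
    fun Bf => {t | ∃ Y : Finset XT, Y.image Prod.snd = Bf ∧ t = r Y} with hS2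
  have hS2ne : ∀ Bf, (S2 Bf).Nonempty := by
    intro Bf
    refine ⟨r (Bf.image fun a => (cen, a)), ⟨Bf.image fun a => (cen, a), ?_, rfl⟩⟩
    rw [Finset.image_image]
    exact Finset.image_id'
  have hS2bd : ∀ Bf, ∀ t ∈ S2 Bf, (0:ℝ) ≤ t := by
    rintro Bf t ⟨Y, hY, rfl⟩; exact hrnn Y
  set r2 : Finset SP → ℝ := fun Bf => sInf (S2 Bf) with hr2
  have hr2single : ∀ Bf, sst Bf ≤ r2 Bf := by
    intro Bf
    apply le_csInf (hS2ne Bf)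
    rintro t ⟨Y, hY, rfl⟩
    rw [← hY]
    exact le_trans (le_max_right _ _) (hsingle Y)
  have hr2pair : ∀ Bf Cf, sst (Bf ∪ Cf) ≤ r2 Bf + r2 Cf := by
    intro Bf Cf
    have key : ∀ t ∈ S2 Bf, ∀ t' ∈ S2 Cf, sst (Bf ∪ Cf) ≤ t + t' := by
      rintro t ⟨Y, hY, rfl⟩ t' ⟨Z, hZ, rfl⟩
      rw [← hY, ← hZ, ← Finset.image_union]
      exact le_trans (le_max_right _ _) (hpair Y Z)
    have h1 : sst (Bf ∪ Cf) - r2 Cf ≤ r2 Bf := by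
      apply le_csInf (hS2ne Bf)
      intro t ht
      have h2 : sst (Bf ∪ Cf) - t ≤ r2 Cf := by
        apply le_csInf (hS2ne Cf)
        intro t' ht'
        linarith [key t ht t' ht']
      linarith
    linarith
  obtain ⟨z2, hz2⟩ := sst_hc r2 hr2single hr2pair
  refine ⟨(z1, z2), fun Y => ?_⟩
  show pdelta (insert (z1, z2) Y) ≤ r Y
  rw [pdelta, Finset.image_insert, Finset.image_insert]
  apply max_le
  · exact le_trans (hz1 (Y.image Prod.fst))
      (csInf_le ⟨0, hS1bd _⟩ ⟨Y, rfl, rfl⟩)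
  · exact le_trans (hz2 (Y.image Prod.snd))
      (csInf_le ⟨0, hS2bd _⟩ ⟨Y, rfl, rfl⟩)

theorem DP_induced_hyperconvex : DP.InducedHyperconvex := by
  intro s hr hp
  have hpair12 : ∀ p ∈ s, ∀ q ∈ s,
      dd p.1.1 q.1.1 ≤ p.2 + q.2 ∧ dd p.1.2 q.1.2 ≤ p.2 + q.2 := by
    intro p hps q hqs
    have h := hp p hps q hqs
    rw [show DP.delta = pdelta from rfl, pdelta_pair] at h
    exact ⟨le_trans (le_max_left _ _) h, le_trans (le_max_right _ _) h⟩
  obtain ⟨z1, hz1⟩ := metric_hc ((fun w : XT × ℝ => (w.1.1, w.2)) '' s)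
    (by rintro p ⟨w, hw, rfl⟩; exact hr w hw)
    (by rintro p ⟨w, hw, rfl⟩ q ⟨w', hw', rfl⟩; exact (hpair12 w hw w' hw').1)
  obtain ⟨z2, hz2⟩ := metric_hc ((fun w : XT × ℝ => (w.1.2, w.2)) '' s)
    (by rintro p ⟨w, hw, rfl⟩; exact hr w hw)
    (by rintro p ⟨w, hw, rfl⟩ q ⟨w', hw', rfl⟩; exact (hpair12 w hw w' hw').2)
  refine ⟨(z1, z2), ?_⟩
  simp only [Set.mem_iInter]
  intro w hw
  show DP.delta {w.1, (z1, z2)} ≤ w.2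
  rw [show DP.delta = pdelta from rfl, pdelta_pair]
  apply max_le
  · have h := hz1 (w.1.1, w.2) ⟨w, hw, rfl⟩
    rwa [dd_comm] at h
  · have h := hz2 (w.1.2, w.2) ⟨w, hw, rfl⟩
    rwa [dd_comm] at h

/-- The swap map, an isometry of the induced metric. -/
def TS : XT → XT := fun w => (w.2, w.1)

theorem TS_isometry (x y : XT) : DP.delta {TS x, TS y} = DP.delta {x, y} := by
  rw [show DP.delta = pdelta from rfl, pdelta_pair, pdelta_pair]
  exact max_comm _ _

end ProductConstruction

section Counterexample
open SP

noncomputable def px1 : SP := ⟨(2, 0), Or.inr rfl⟩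
noncomputable def px2 : SP := ⟨(0, 2), Or.inl rfl⟩
noncomputable def px3 : SP := ⟨(0, -2), Or.inl rfl⟩

lemma sdm_triple : sdm {px1, px2, px3} = 4 := by
  apply le_antisymm
  · rw [sdm_le_iff ⟨px1, by simp⟩]
    intro p hp q hq
    simp only [Finset.mem_insert, Finset.mem_singleton] at hp hq
    rcases hp with rfl | rfl | rfl <;> rcases hq with rfl | rfl | rfl <;>
      norm_num [dd, px1, px2, px3]
  · have h := dd_le_sdm (A := {px1, px2, px3}) (p := px2) (q := px3) (by simp) (by simp)
    have : dd px2 px3 = 4 := by norm_num [dd, px2, px3]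
    linarith

lemma sst_triple : sst {px1, px2, px3} = 6 := by
  have hne : ({px1, px2, px3} : Finset SP).Nonempty := ⟨px1, by simp⟩
  have h1 : Mx {px1, px2, px3} = 2 := by
    apply le_antisymm
    · rw [Mx_le_iff hne]
      intro p hp
      simp only [Finset.mem_insert, Finset.mem_singleton] at hp
      rcases hp with rfl | rfl | rfl <;> norm_num [px1, px2, px3]
    · have h := le_Mx (A := {px1, px2, px3}) (p := px1) (by simp)
      simpa [px1] using h
  have h2 : mx {px1, px2, px3} = 0 := by
    apply le_antisymm
    · have h := mx_le (A := {px1, px2, px3}) (p := px2) (by simp)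
      simpa [px2] using h
    · rw [le_mx_iff hne]
      intro p hp
      simp only [Finset.mem_insert, Finset.mem_singleton] at hp
      rcases hp with rfl | rfl | rfl <;> norm_num [px1, px2, px3]
  have h3 : My {px1, px2, px3} = 2 := by
    apply le_antisymm
    · rw [My_le_iff hne]
      intro p hp
      simp only [Finset.mem_insert, Finset.mem_singleton] at hp
      rcases hp with rfl | rfl | rfl <;> norm_num [px1, px2, px3]
    · have h := le_My (A := {px1, px2, px3}) (p := px2) (by simp)
      simpa [px2] using h
  have h4 : my {px1, px2, px3} = -2 := by
    apply le_antisymm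
    · have h := my_le (A := {px1, px2, px3}) (p := px3) (by simp)
      simpa [px3] using h
    · rw [le_my_iff hne]
      intro p hp
      simp only [Finset.mem_insert, Finset.mem_singleton] at hp
      rcases hp with rfl | rfl | rfl <;> norm_num [px1, px2, px3]
  rw [sst, h1, h2, h3, h4]
  norm_num

end Counterexample


/-- There exist a hyperconvex diversity `(X, δ)` whose induced metric
space is a hyperconvex metric space, and a map `T : X → X` which is an isometry (hence
nonexpansive) for the induced metric `d(x,y) = δ {x,y}`, but which is not nonexpansive
in the sense of diversities: `δ(T(A)) > δ(A)` for some finite `A ⊆ X`. -/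
theorem exists_metric_nonexpansive_not_diversity_nonexpansive :
    ∃ (X : Type) (_ : DecidableEq X) (D : Diversity X) (T : X → X),
      D.Hyperconvex ∧ D.InducedHyperconvex ∧
      (∀ x y : X, D.delta {T x, T y} = D.delta {x, y}) ∧
      ∃ A : Finset X, D.delta A < D.delta (A.image T) := by
  classical
  refine ⟨XT, inferInstance, DP, TS, DP_hyperconvex, DP_induced_hyperconvex, TS_isometry, ?_⟩
  refine ⟨{(px1, SP.cen), (px2, SP.cen), (px3, SP.cen)}, ?_⟩
  have him : ({(px1, SP.cen), (px2, SP.cen), (px3, SP.cen)} : Finset XT).image TS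
      = {(SP.cen, px1), (SP.cen, px2), (SP.cen, px3)} := by
    rw [show ({(px1, SP.cen), (px2, SP.cen), (px3, SP.cen)} : Finset XT)
      = insert (px1, SP.cen) (insert (px2, SP.cen) {(px3, SP.cen)}) from rfl]
    rw [Finset.image_insert, Finset.image_insert, Finset.image_singleton]
    rfl
  have hA : DP.delta {(px1, SP.cen), (px2, SP.cen), (px3, SP.cen)} = 4 := by
    show pdelta _ = 4
    have h1 : ({(px1, SP.cen), (px2, SP.cen), (px3, SP.cen)} : Finset XT).image Prod.fst
        = {px1, px2, px3} := by
      rw [show ({(px1, SP.cen), (px2, SP.cen), (px3, SP.cen)} : Finset XT)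
        = insert (px1, SP.cen) (insert (px2, SP.cen) {(px3, SP.cen)}) from rfl]
      rw [Finset.image_insert, Finset.image_insert, Finset.image_singleton]
    have h2 : ({(px1, SP.cen), (px2, SP.cen), (px3, SP.cen)} : Finset XT).image Prod.snd
        = {SP.cen} := by
      rw [show ({(px1, SP.cen), (px2, SP.cen), (px3, SP.cen)} : Finset XT)
        = insert (px1, SP.cen) (insert (px2, SP.cen) {(px3, SP.cen)}) from rfl]
      rw [Finset.image_insert, Finset.image_insert, Finset.image_singleton]
      simp
    rw [pdelta, h1, h2, sdm_triple, SP.sst_singleton]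
    norm_num
  have hTA : DP.delta ({(SP.cen, px1), (SP.cen, px2), (SP.cen, px3)} : Finset XT) = 6 := by
    show pdelta _ = 6
    have h1 : ({(SP.cen, px1), (SP.cen, px2), (SP.cen, px3)} : Finset XT).image Prod.fst
        = {SP.cen} := by
      rw [show ({(SP.cen, px1), (SP.cen, px2), (SP.cen, px3)} : Finset XT)
        = insert (SP.cen, px1) (insert (SP.cen, px2) {(SP.cen, px3)}) from rfl]
      rw [Finset.image_insert, Finset.image_insert, Finset.image_singleton]
      simp
    have h2 : ({(SP.cen, px1), (SP.cen, px2), (SP.cen, px3)} : Finset XT).image Prod.snd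
        = {px1, px2, px3} := by
      rw [show ({(SP.cen, px1), (SP.cen, px2), (SP.cen, px3)} : Finset XT)
        = insert (SP.cen, px1) (insert (SP.cen, px2) {(SP.cen, px3)}) from rfl]
      rw [Finset.image_insert, Finset.image_insert, Finset.image_singleton]
    rw [pdelta, h1, h2, SP.sdm_singleton, sst_triple]
    norm_num
  rw [him, hA, hTA]
  norm_num
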